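/- Define p_n(σ) by p_0(σ) = 1, p_1(σ) = σ, and (n+2)·p_{n+1}(σ) = (2n+1)(1+2σ)·p_n(σ) − (n−1)·p_{n−1}(σ) for n ≥ 1. Then p_n(σ) = Σ_{k=0}^{n} (−1)^{n+k}·C(n+k, n−k)·Cat(k)·(1+σ)^k for all n ≥ 0. -/

import Mathlib

open Finset Nat

noncomputable def Aux (n k : ℕ) : ℚ :=
  if k ≤ n then (-1)^(n+k) * (Nat.choose (n+k) (n-k) : ℚ) * (catalan k : ℚ) else 0

lemma cat_cast (k : ℕ) : (catalan k : ℚ) = (2*k)! / ((k)! * (k)! * (k+1)) := by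
  have h := succ_mul_catalan_eq_centralBinom k
  have h' : ((k:ℚ)+1) * catalan k = ((2*k).choose k : ℚ) := by
    exact_mod_cast congrArg (Nat.cast : ℕ → ℚ) h
  rw [Nat.cast_choose ℚ (by omega : k ≤ 2*k)] at h'
  have h2 : (2*k - k) = k := by omega
  rw [h2] at h'
  have hk : ((k)! : ℚ) ≠ 0 := by positivity
  have hk1 : ((k:ℚ)+1) ≠ 0 := by positivity
  field_simp at h' ⊢
  linarith [h']

lemma fact_nz (m : ℕ) : ((m)! : ℚ) ≠ 0 := by positivity

lemma cat_rec (m : ℕ) : ((m:ℚ)+2) * catalan (m+1) = 2*(2*(m:ℚ)+1) * catalan m := by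
  rw [cat_cast, cat_cast]
  have e1 : (2*(m+1)) = (2*m+1)+1 := by omega
  rw [e1, Nat.factorial_succ, Nat.factorial_succ, Nat.factorial_succ]
  have h1 := fact_nz m
  have h2 := fact_nz (2*m)
  have h3 : ((m:ℚ)+1) ≠ 0 := by positivity
  have h4 : ((m:ℚ)+1+1) ≠ 0 := by positivity
  field_simp
  push_cast
  ring


lemma f1 (a : ℕ) : ((a+1)! : ℚ) = ((a:ℚ)+1) * (a)! := by
  rw [Nat.factorial_succ]; push_cast; ring

lemma f2 (a : ℕ) : ((a+2)! : ℚ) = ((a:ℚ)+2)*((a:ℚ)+1) * (a)! := by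
  rw [show a+2 = (a+1)+1 from by omega, Nat.factorial_succ, Nat.factorial_succ]; push_cast; ring

lemma f3 (a : ℕ) : ((a+3)! : ℚ) = ((a:ℚ)+3)*((a:ℚ)+2)*((a:ℚ)+1) * (a)! := by
  rw [show a+3 = (a+2)+1 from by omega, Nat.factorial_succ]; push_cast; rw [f2]; ring

lemma f4 (a : ℕ) : ((a+4)! : ℚ) = ((a:ℚ)+4)*((a:ℚ)+3)*((a:ℚ)+2)*((a:ℚ)+1) * (a)! := by
  rw [show a+4 = (a+3)+1 from by omega, Nat.factorial_succ]; push_cast; rw [f3]; ring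

lemma keyGen (j c : ℕ) :
    ((c:ℚ)+j+4) * (Nat.choose (2*c+j+4) (j+2) : ℚ) * catalan (c+1)
      = (2*((c:ℚ)+j+2)+1) * (2 * (Nat.choose (2*c+j+2) (j+2) : ℚ) * catalan c
          + (Nat.choose (2*c+j+3) (j+1) : ℚ) * catalan (c+1))
        - ((c:ℚ)+j+1) * (Nat.choose (2*c+j+2) j : ℚ) * catalan (c+1) := by
  rw [Nat.cast_choose ℚ (by omega : j+2 ≤ 2*c+j+4),
      Nat.cast_choose ℚ (by omega : j+2 ≤ 2*c+j+2),
      Nat.cast_choose ℚ (by omega : j+1 ≤ 2*c+j+3),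
      Nat.cast_choose ℚ (by omega : j ≤ 2*c+j+2),
      cat_cast, cat_cast]
  rw [show 2*c+j+4 - (j+2) = 2*c+2 from by omega,
      show 2*c+j+2 - (j+2) = 2*c from by omega,
      show 2*c+j+3 - (j+1) = 2*c+2 from by omega,
      show 2*c+j+2 - j = 2*c+2 from by omega,
      show 2*(c+1) = 2*c+2 from by omega]
  rw [f4 (2*c+j), f3 (2*c+j), f2 (2*c+j), f2 j, f1 j, f2 (2*c), f1 c]
  have h1 := fact_nz j
  have h2 := fact_nz c
  have h3 := fact_nz (2*c)
  have h4 := fact_nz (2*c+j)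
  have h5 : ((j:ℚ)+1) ≠ 0 := by positivity
  have h6 : ((j:ℚ)+2) ≠ 0 := by positivity
  have h7 : ((c:ℚ)+1) ≠ 0 := by positivity
  have h8 : ((c:ℚ)+1+1) ≠ 0 := by positivity
  have h9 : (2*(c:ℚ)+1) ≠ 0 := by positivity
  have h10 : (2*(c:ℚ)+2) ≠ 0 := by positivity
  have h11 : (2*(c:ℚ)+(j:ℚ)+1) ≠ 0 := by positivity
  have h12 : (2*(c:ℚ)+(j:ℚ)+2) ≠ 0 := by positivity
  have h13 : (2*(c:ℚ)+(j:ℚ)+3) ≠ 0 := by positivity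
  have h14 : (2*(c:ℚ)+(j:ℚ)+4) ≠ 0 := by positivity
  field_simp
  push_cast
  ring

lemma neg_one_pow_two_mul_add (a b : ℕ) : ((-1:ℚ))^(2*a+b) = (-1)^b := by
  rw [pow_add, pow_mul]; norm_num

lemma Aident (n k : ℕ) (hn : 1 ≤ n) :
    ((n:ℚ)+2) * Aux (n+1) k
      = (2*(n:ℚ)+1) * (2 * (if k = 0 then 0 else Aux n (k-1)) - Aux n k)
        - ((n:ℚ)-1) * Aux (n-1) k := by
  obtain ⟨m, rfl⟩ : ∃ m, n = m + 1 := ⟨n-1, by omega⟩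
  rcases Nat.eq_zero_or_pos k with rfl | hk
  · -- k = 0
    simp only [Aux, Nat.add_sub_cancel, if_pos (by omega : 0 ≤ m+1+1),
      if_pos (by omega : 0 ≤ m+1), if_pos (by omega : 0 ≤ m), if_pos rfl,
      add_zero, Nat.sub_zero, Nat.choose_self, Nat.cast_one, catalan_zero]
    push_cast
    ring
  obtain ⟨c, rfl⟩ : ∃ c, k = c + 1 := ⟨k-1, by omega⟩
  rw [if_neg (by omega : ¬ c + 1 = 0)]
  rcases lt_trichotomy (c+1) (m+1) with hlt | heq | hgt
  · -- 1 ≤ k ≤ n-1 : generic case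
    obtain ⟨j, rfl⟩ : ∃ j, m = c + j + 1 := ⟨m - c - 1, by omega⟩
    simp only [Aux, Nat.add_sub_cancel]
    rw [if_pos (by omega : c + 1 ≤ c+j+1+1+1), if_pos (by omega : c ≤ c+j+1+1),
        if_pos (by omega : c + 1 ≤ c+j+1+1), if_pos (by omega : c + 1 ≤ c+j+1)]
    rw [show c+j+1+1+1+(c+1) = 2*c+j+4 from by omega,
        show c+j+1+1+1-(c+1) = j+2 from by omega,
        show c+j+1+1+c = 2*c+j+2 from by omega,
        show c+j+1+1-c = j+2 from by omega,
        show c+j+1+1+(c+1) = 2*c+j+3 from by omega,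
        show c+j+1+1-(c+1) = j+1 from by omega,
        show c+j+1+(c+1) = 2*c+j+2 from by omega,
        show c+j+1-(c+1) = j from by omega]
    have s4 : ((-1:ℚ))^(2*c+j+4) = (-1)^j := by
      rw [show 2*c+j+4 = 2*(c+2)+j from by omega, neg_one_pow_two_mul_add]
    have s3 : ((-1:ℚ))^(2*c+j+3) = -(-1)^j := by
      rw [show 2*c+j+3 = 2*(c+1)+(j+1) from by omega, neg_one_pow_two_mul_add, pow_succ]
      ring
    have s2 : ((-1:ℚ))^(2*c+j+2) = (-1)^j := by
      rw [show 2*c+j+2 = 2*(c+1)+j from by omega, neg_one_pow_two_mul_add]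
    rw [s4, s3, s2]
    push_cast
    linear_combination (norm := (push_cast; ring1)) ((-1:ℚ))^j * keyGen j c
  · -- k = n
    obtain rfl : c = m := by omega
    simp only [Aux, Nat.add_sub_cancel]
    rw [if_pos (by omega : c + 1 ≤ c+1+1), if_pos (by omega : c ≤ c+1),
        if_pos (by omega : c + 1 ≤ c+1), if_neg (by omega : ¬ c + 1 ≤ c)]
    rw [show c+1+1+(c+1) = 2*c+3 from by omega,
        show c+1+1-(c+1) = 1 from by omega,
        show c+1+c = 2*c+1 from by omega,
        show c+1-c = 1 from by omega,
        show c+1+(c+1) = 2*c+2 from by omega,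
        show c+1-(c+1) = 0 from by omega]
    have s3 : ((-1:ℚ))^(2*c+3) = -1 := by
      rw [show 2*c+3 = 2*(c+1)+1 from by omega, neg_one_pow_two_mul_add, pow_one]
    have s1 : ((-1:ℚ))^(2*c+1) = -1 := by
      rw [neg_one_pow_two_mul_add, pow_one]
    have s2 : ((-1:ℚ))^(2*c+2) = 1 := by
      rw [show 2*c+2 = 2*(c+1)+0 from by omega, neg_one_pow_two_mul_add, pow_zero]
    rw [s3, s1, s2]
    simp only [Nat.choose_one_right, Nat.choose_zero_right, Nat.cast_one]
    push_cast
    linear_combination (norm := (push_cast; ring1)) (-(2*(c:ℚ)+3)) * cat_rec c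
  · rcases lt_trichotomy (c+1) (m+2) with hlt2 | heq2 | hgt2
    · omega
    · -- k = n+1
      obtain rfl : c = m + 1 := by omega
      simp only [Aux, Nat.add_sub_cancel]
      rw [if_pos (by omega : m + 1 + 1 ≤ m+1+1), if_pos (by omega : m + 1 ≤ m+1),
          if_neg (by omega : ¬ m + 1 + 1 ≤ m+1), if_neg (by omega : ¬ m + 1 + 1 ≤ m)]
      rw [show m+1+1-(m+1+1) = 0 from by omega, show m+1-(m+1) = 0 from by omega]
      simp only [Nat.choose_zero_right, Nat.cast_one]
      have s1 : ((-1:ℚ))^(m+1+1+(m+1+1)) = 1 := by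
        rw [show m+1+1+(m+1+1) = 2*(m+2)+0 from by omega, neg_one_pow_two_mul_add, pow_zero]
      have s2 : ((-1:ℚ))^(m+1+(m+1)) = 1 := by
        rw [show m+1+(m+1) = 2*(m+1)+0 from by omega, neg_one_pow_two_mul_add, pow_zero]
      rw [s1, s2]
      push_cast
      linear_combination (norm := (push_cast; ring1)) cat_rec (m+1)
    · -- k ≥ n+2 : everything vanishes
      simp only [Aux, Nat.add_sub_cancel]
      rw [if_neg (by omega : ¬ c + 1 ≤ m+1+1), if_neg (by omega : ¬ c ≤ m+1),
          if_neg (by omega : ¬ c + 1 ≤ m+1), if_neg (by omega : ¬ c + 1 ≤ m)]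
      ring

lemma aux_zero (n k : ℕ) (h : n < k) : Aux n k = 0 := if_neg (by omega)

lemma sum_ext (n M : ℕ) (h : n + 1 ≤ M) (x : ℚ) :
    ∑ k ∈ Finset.range M, Aux n k * x^k = ∑ k ∈ Finset.range (n+1), Aux n k * x^k := by
  refine (Finset.sum_subset (Finset.range_subset_range.2 h) ?_).symm
  intro k _ hk2
  have hnk : n < k := by
    by_contra h'
    exact hk2 (Finset.mem_range.2 (by omega))
  rw [aux_zero n k hnk, zero_mul]

lemma sumKey (n : ℕ) (hn : 1 ≤ n) (x : ℚ) :
    ((n:ℚ)+2) * ∑ k ∈ Finset.range (n+3), Aux (n+1) k * x^k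
      = (2*(n:ℚ)+1) * (2*x-1) * ∑ k ∈ Finset.range (n+3), Aux n k * x^k
        - ((n:ℚ)-1) * ∑ k ∈ Finset.range (n+3), Aux (n-1) k * x^k := by
  have shift : (∑ k ∈ Finset.range (n+3), Aux n k * x^k) * x
      = ∑ k ∈ Finset.range (n+3), (if k = 0 then 0 else Aux n (k-1)) * x^k := by
    rw [Finset.sum_mul,
        Finset.sum_range_succ' (fun k => (if k = 0 then 0 else Aux n (k-1)) * x^k) (n+2),
        Finset.sum_range_succ (fun k => Aux n k * x^k * x) (n+2),
        aux_zero n (n+2) (by omega)]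
    simp only [Nat.succ_ne_zero, if_false, Nat.add_sub_cancel, if_true, zero_mul, add_zero,
      mul_one, pow_zero]
    apply Finset.sum_congr rfl
    intro k _
    ring
  have main_eq : ∑ k ∈ Finset.range (n+3), ((n:ℚ)+2) * (Aux (n+1) k * x^k)
      = (2*(n:ℚ)+1) * 2 * (∑ k ∈ Finset.range (n+3), (if k = 0 then 0 else Aux n (k-1)) * x^k)
        - (2*(n:ℚ)+1) * (∑ k ∈ Finset.range (n+3), Aux n k * x^k)
        - ((n:ℚ)-1) * (∑ k ∈ Finset.range (n+3), Aux (n-1) k * x^k) := by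
    rw [Finset.mul_sum, Finset.mul_sum, Finset.mul_sum, ← Finset.sum_sub_distrib,
      ← Finset.sum_sub_distrib]
    apply Finset.sum_congr rfl
    intro k _
    linear_combination x^k * (Aident n k hn)
  rw [Finset.mul_sum, main_eq, ← shift]
  ring



/-- With p_0(σ) = 1, p_1(σ) = σ and (n+2)p_{n+1}(σ) = (2n+1)(1+2σ)p_n(σ) - (n-1)p_{n-1}(σ)
for n ≥ 1, one has p_n(σ) = Σ_{k=0}^{n} (-1)^{n+k}·C(n+k, n-k)·Cat(k)·(1+σ)^k for all n. -/
theorem stmt9 (p : ℕ → ℚ → ℚ)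
    (h0 : ∀ σ : ℚ, p 0 σ = 1) (h1 : ∀ σ : ℚ, p 1 σ = σ)
    (hrec : ∀ n : ℕ, 1 ≤ n → ∀ σ : ℚ,
      ((n : ℚ) + 2) * p (n + 1) σ =
        (2 * (n : ℚ) + 1) * (1 + 2 * σ) * p n σ - ((n : ℚ) - 1) * p (n - 1) σ) :
    ∀ n : ℕ, ∀ σ : ℚ,
      p n σ = ∑ k ∈ Finset.range (n + 1),
        (-1) ^ (n + k) * (Nat.choose (n + k) (n - k) : ℚ) * (catalan k : ℚ) * (1 + σ) ^ k := by
  have main : ∀ n, (∀ σ : ℚ, p n σ = ∑ k ∈ Finset.range (n+1), Aux n k * (1+σ)^k)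
      ∧ (∀ σ : ℚ, p (n+1) σ = ∑ k ∈ Finset.range (n+2), Aux (n+1) k * (1+σ)^k) := by
    intro n
    induction n with
    | zero =>
      constructor
      · intro σ
        rw [h0, Finset.sum_range_one]
        simp [Aux]
      · intro σ
        rw [h1, Finset.sum_range_succ, Finset.sum_range_one]
        simp only [Aux]
        norm_num [catalan_one]
    | succ m ih =>
      refine ⟨ih.2, ?_⟩
      intro σ
      have hr := hrec (m+1) (by omega) σ
      have hkey := sumKey (m+1) (by omega) (1+σ)
      simp only [Nat.add_sub_cancel] at hr hkey
      rw [ih.1, ih.2] at hr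
      rw [show m+1+1 = m+2 from by omega, show m+1+3 = m+4 from by omega] at hkey
      rw [sum_ext (m+2) (m+4) (by omega), sum_ext (m+1) (m+4) (by omega),
          sum_ext m (m+4) (by omega)] at hkey
      have hne : ((m+1:ℕ):ℚ) + 2 ≠ 0 := by positivity
      rw [show m+1+1 = m+2 from by omega, show m+1+2 = m+3 from by omega]
      apply mul_left_cancel₀ hne
      rw [hr, hkey]
      push_cast
      ring
  intro n σ
  refine ((main n).1 σ).trans (Finset.sum_congr rfl ?_)
  intro k hk
  have hk' : k ≤ n := by simpa [Nat.lt_succ_iff] using Finset.mem_range.1 hk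
  simp only [Aux, if_pos hk']
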